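/- The alternating sum Σ_{i≥0} (−1)^i sch_ν(i) equals 1, where sch_ν(i) is the number of ν-Schröder paths with i diagonal steps. -/

import Mathlib

/-- Steps of a (Schröder) lattice path: north, east, diagonal. -/
inductive Step : Type
  | N | E | D
deriving DecidableEq, Repr

/-- Total horizontal displacement of a path. -/
def eLen (p : List Step) : ℕ := p.count Step.E + p.count Step.D

/-- Total vertical displacement of a path. -/
def nLen (p : List Step) : ℕ := p.count Step.N + p.count Step.D

/-- A lattice path uses only `N` and `E` steps. -/
def IsLatticePath (ν : List Step) : Prop := Step.D ∉ ν

/-- `colVal p x` is twice the starting height of the step of `p` crossing the vertical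
strip between abscissas `x` and `x+1`, plus `1` if that step is diagonal.  Comparing these
values columnwise is equivalent to comparing the heights of the paths over each strip. -/
def colVal : List Step → ℕ → ℕ
  | [], _ => 0
  | Step.N :: p, x => colVal p x + 2
  | Step.E :: _, 0 => 0
  | Step.E :: p, x+1 => colVal p x
  | Step.D :: _, 0 => 1
  | Step.D :: p, x+1 => colVal p x + 2

/-- `π` stays weakly above `ρ` (same endpoints intended). -/
def WeaklyAbove (π ρ : List Step) : Prop := ∀ x, colVal ρ x ≤ colVal π x

/-- Replace every peak (consecutive `NE`) of a path by a diagonal step; applied to `ν`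
this gives the path `μ` of the large ν-Schröder path definition. -/
def cutPeaks : List Step → List Step
  | [] => []
  | Step.N :: Step.E :: p => Step.D :: cutPeaks p
  | s :: p => s :: cutPeaks p

/-- A ν-Dyck path: an `N,E` path with the same endpoints as `ν` staying weakly above `ν`. -/
def IsNuDyck (ν π : List Step) : Prop :=
  Step.D ∉ π ∧ eLen π = eLen ν ∧ nLen π = nLen ν ∧ WeaklyAbove π ν

/-- A (small) ν-Schröder path: an `N,E,D` path with the same endpoints as `ν` staying weakly
above `ν` (this automatically forbids diagonal steps on the ν-diagonal). -/
def IsSmallSchroder (ν π : List Step) : Prop :=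
  eLen π = eLen ν ∧ nLen π = nLen ν ∧ WeaklyAbove π ν

/-- A large ν-Schröder path: an `N,E,D` path with the same endpoints as `ν` staying weakly
above the path obtained from `ν` by replacing each peak by a diagonal step. -/
def IsLargeSchroder (ν π : List Step) : Prop :=
  eLen π = eLen ν ∧ nLen π = nLen ν ∧ WeaklyAbove π (cutPeaks ν)

/-- Number of peaks (consecutive `NE` pairs). -/
def peaks (p : List Step) : ℕ := (p.zip p.tail).count (Step.N, Step.E)

/-- Number of valleys (consecutive `EN` pairs). -/
def valleys (p : List Step) : ℕ := (p.zip p.tail).count (Step.E, Step.N)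

/-- Lattice points at which valleys of a path occur (starting the path at `(x,y)`). -/
def valleyPts : List Step → ℕ → ℕ → List (ℕ × ℕ)
  | [], _, _ => []
  | Step.E :: p, x, y =>
      (if p.head? = some Step.N then [(x+1, y)] else []) ++ valleyPts p (x+1) y
  | Step.N :: p, x, y => valleyPts p x (y+1)
  | Step.D :: p, x, y => valleyPts p (x+1) (y+1)

/-- Lattice points at which high peaks (peaks strictly above `ν`) of a path occur. -/
def highPeakPts (ν : List Step) : List Step → ℕ → ℕ → List (ℕ × ℕ)
  | [], _, _ => []
  | Step.N :: p, x, y =>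
      (if p.head? = some Step.E ∧ colVal ν x < 2*(y+1) then [(x, y+1)] else []) ++
        highPeakPts ν p x (y+1)
  | Step.E :: p, x, y => highPeakPts ν p (x+1) y
  | Step.D :: p, x, y => highPeakPts ν p (x+1) (y+1)

/-- Number of high peaks of `π` relative to `ν`. -/
def highPeaks (ν π : List Step) : ℕ := (highPeakPts ν π 0 0).length

/-- j-th ν-Narayana number: number of ν-Dyck paths with exactly `j` valleys. -/
noncomputable def Nar (ν : List Step) (j : ℕ) : ℕ :=
  Nat.card {π : List Step // IsNuDyck ν π ∧ valleys π = j}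

/-- Number of small ν-Schröder paths with exactly `i` diagonal steps. -/
noncomputable def schNum (ν : List Step) (i : ℕ) : ℕ :=
  Nat.card {π : List Step // IsSmallSchroder ν π ∧ π.count Step.D = i}

/-- `lowH ν x` is the lowest height of a point of `ν` at abscissa `x`. -/
def lowH : List Step → ℕ → ℕ
  | _, 0 => 0
  | [], _+1 => 0
  | Step.N :: p, x+1 => lowH p (x+1) + 1
  | Step.E :: p, x+1 => lowH p x
  | Step.D :: p, x+1 => lowH p x + 1

/-- The lowest lattice path from `(0,0)` to `(b,a)` weakly above the line segment
from `(0,0)` to `(b,a)`. -/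
def nuAB (a b : ℕ) : List Step :=
  (List.range b).flatMap (fun x =>
    List.replicate (((x+1)*a + b - 1)/b - (x*a + b - 1)/b) Step.N ++ [Step.E])

/-- Number of large rational `(a,b)`-Schröder paths with `i` diagonal steps. -/
noncomputable def largeCount (a b i : ℕ) : ℕ :=
  Nat.card {π : List Step // IsLargeSchroder (nuAB a b) π ∧ π.count Step.D = i}

/-- Number of small rational `(a,b)`-Schröder paths with `i` diagonal steps. -/
noncomputable def smallCount (a b i : ℕ) : ℕ :=
  Nat.card {π : List Step // IsSmallSchroder (nuAB a b) π ∧ π.count Step.D = i}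

/-- Binomial coefficient with an integer lower entry (zero when negative). -/
def chooseZ (n : ℕ) (k : ℤ) : ℕ := if 0 ≤ k then n.choose k.toNat else 0

/-- The region weakly above `ν` in the rectangle `[0,b] × [0,a]`. -/
def InRegion (ν : List Step) (p : ℕ × ℕ) : Prop :=
  p.1 ≤ eLen ν ∧ p.2 ≤ nLen ν ∧ lowH ν p.1 ≤ p.2

/-- Two points of the region are ν-incompatible if one is strictly southwest of the other and
the rectangle they span lies in the region (equivalently its bottom-right corner does). -/
def Incompat (ν : List Step) (p q : ℕ × ℕ) : Prop :=
  ((p.1 < q.1 ∧ p.2 < q.2) ∨ (q.1 < p.1 ∧ q.2 < p.2)) ∧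
    InRegion ν (max p.1 q.1, min p.2 q.2)

/-- A ν-binary tree: a maximal set of pairwise ν-compatible points of the region. -/
def IsBinaryTree (ν : List Step) (T : Finset (ℕ × ℕ)) : Prop :=
  (∀ p ∈ T, InRegion ν p) ∧ (∀ p ∈ T, ∀ q ∈ T, ¬ Incompat ν p q) ∧
    ∀ r, InRegion ν r → (∀ p ∈ T, ¬ Incompat ν r p) → r ∈ T

/-- A ν-Schröder tree: pairwise ν-compatible points of the region containing the root
`(0,a)` and meeting every row and every column. -/
def IsSchroderTree (ν : List Step) (T : Finset (ℕ × ℕ)) : Prop :=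
  (∀ p ∈ T, InRegion ν p) ∧ (∀ p ∈ T, ∀ q ∈ T, ¬ Incompat ν p q) ∧
    (0, nLen ν) ∈ T ∧ (∀ y ≤ nLen ν, ∃ p ∈ T, p.2 = y) ∧ (∀ x ≤ eLen ν, ∃ p ∈ T, p.1 = x)

/-- One contraction step: delete a node, provided the result is still a ν-Schröder tree. -/
def ContractStep (ν : List Step) (T T' : Finset (ℕ × ℕ)) : Prop :=
  ∃ q ∈ T, T' = T.erase q ∧ IsSchroderTree ν T'

/-- `p` is a leaf of the (plane tree associated to the) node set `T`: no node strictly below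
it in its column and none strictly to its right in its row. -/
def IsLeafIn (T : Finset (ℕ × ℕ)) (p : ℕ × ℕ) : Prop :=
  (∀ q ∈ T, ¬(q.1 = p.1 ∧ q.2 < p.2)) ∧ (∀ q ∈ T, ¬(q.2 = p.2 ∧ p.1 < q.1))

/-- Starting points of vertical runs and ending points of horizontal runs of `ν`. -/
def leafPts (ν : List Step) : Finset (ℕ × ℕ) :=
  (valleyPts ν 0 0).toFinset ∪ (if ν.head? = some Step.N then {((0 : ℕ), (0 : ℕ))} else ∅) ∪
    (if ν.getLast? = some Step.E then {(eLen ν, nLen ν)} else ∅)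

/-- `horizNu ν x y`: maximal number of east steps that can be placed starting at `(x,y)`
before crossing `ν` (staying within the bounding rectangle). -/
def horizNu (ν : List Step) (x y : ℕ) : ℕ :=
  ((Finset.Icc 1 (eLen ν - x)).filter (fun k => lowH ν (x + k) ≤ y)).card

/-- No `N` step of the given path (started at `(x,y)`) has initial point with
`horizNu`-value `h`. -/
def noNAt (ν : List Step) (h : ℕ) : List Step → ℕ → ℕ → Prop
  | [], _, _ => True
  | Step.N :: p, x, y => horizNu ν x y ≠ h ∧ noNAt ν h p x (y+1)
  | Step.E :: p, x, y => noNAt ν h p (x+1) y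
  | Step.D :: p, x, y => noNAt ν h p (x+1) (y+1)

/-- Right contraction: replace a consecutive `EN` pair (a valley) by a `D` step. -/
def RightC (μ lam : List Step) : Prop :=
  ∃ p q, μ = p ++ Step.E :: Step.N :: q ∧ lam = p ++ Step.D :: q

/-- Left contraction: delete an `E` step together with the most recent preceding `N` step
whose initial point has the same `horizNu` statistic as the initial point of the `E` step,
shift the intermediate subpath, and place a `D` step at the initial point of the `N` step. -/
def LeftC (ν μ lam : List Step) : Prop :=
  ∃ p m q, μ = p ++ Step.N :: (m ++ Step.E :: q) ∧ lam = p ++ Step.D :: (m ++ q) ∧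
    horizNu ν (eLen p) (nLen p)
      = horizNu ν (eLen (p ++ Step.N :: m)) (nLen (p ++ Step.N :: m)) ∧
    noNAt ν (horizNu ν (eLen (p ++ Step.N :: m)) (nLen (p ++ Step.N :: m)))
      m (eLen p) (nLen p + 1)

/-- Diagonal contraction: delete an `E` step ending at the initial point `r` of a `D` step,
together with the most recent preceding `N` step whose initial point `s` satisfies
`horizNu s = horizNu r`, shift the intermediate subpath, and place a `D` step at `s`. -/
def DiagC (ν μ lam : List Step) : Prop :=
  ∃ p m q, μ = p ++ Step.N :: (m ++ Step.E :: Step.D :: q) ∧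
    lam = p ++ Step.D :: (m ++ Step.D :: q) ∧
    horizNu ν (eLen p) (nLen p)
      = horizNu ν (eLen (p ++ Step.N :: m) + 1) (nLen (p ++ Step.N :: m)) ∧
    noNAt ν (horizNu ν (eLen (p ++ Step.N :: m) + 1) (nLen (p ++ Step.N :: m)))
      m (eLen p) (nLen p + 1)

/-- Cover relation of the contraction poset of ν-Schröder paths. -/
def Covers (ν μ lam : List Step) : Prop :=
  IsSmallSchroder ν μ ∧ IsSmallSchroder ν lam ∧
    (RightC μ lam ∨ LeftC ν μ lam ∨ DiagC ν μ lam)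

/-- The Morse matching: `σ` (having a `D` step preceded by no valley) is matched with the
path `π` obtained by replacing the first such `D` step by `EN`. -/
def MorseM (ν : List Step) : Set (List Step × List Step) :=
  { z | ∃ p q, Step.D ∉ p ∧ valleys p = 0 ∧
      z.2 = p ++ Step.D :: q ∧ z.1 = p ++ Step.E :: Step.N :: q ∧ IsSmallSchroder ν z.2 }

/-- Twice the area between a small ν-Schröder path and `ν`. -/
def area2 (ν π : List Step) : ℕ :=
  ∑ x ∈ Finset.range (eLen ν), (colVal π x - colVal ν x)

/-- An `(I,J̄)`-forest: increasing, non-crossing arcs. -/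
def IsIJForest (I J : Finset ℕ) (F : Finset (ℕ × ℕ)) : Prop :=
  (∀ a ∈ F, a.1 ∈ I ∧ a.2 ∈ J ∧ a.1 < a.2) ∧
    (∀ a ∈ F, ∀ a' ∈ F, ¬(a.1 < a'.1 ∧ a'.1 < a.2 ∧ a.2 < a'.2))

/-- A covering `(I,J̄)`-forest: contains the arc `(1,n)` and has no isolated node. -/
def IsCoveringForest (n : ℕ) (I J : Finset ℕ) (F : Finset (ℕ × ℕ)) : Prop :=
  IsIJForest I J F ∧ (1, n) ∈ F ∧
    (∀ i ∈ I, ∃ a ∈ F, a.1 = i) ∧ (∀ j ∈ J, ∃ a ∈ F, a.2 = j)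

/-- The lattice path read off from the interleaving of `I` and `J̄` (elements `2,…,n-1`,
`E` for elements of `I`, `N` for the others). -/
def nuOf (n : ℕ) (I : Finset ℕ) : List Step :=
  (List.range' 2 (n - 2)).map (fun k => if k ∈ I then Step.E else Step.N)

/-! ### Auxiliary development for the alternating sum theorem -/

instance : Fintype Step :=
  ⟨{Step.N, Step.E, Step.D}, fun x => by cases x <;> simp⟩

/-- All lists of `Step`s of length at most `n`. -/
def allLists : ℕ → Finset (List Step)
  | 0 => {[]}
  | n+1 => insert [] ((Finset.univ ×ˢ allLists n).image fun sl => sl.1 :: sl.2)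

lemma mem_allLists : ∀ (n : ℕ) (π : List Step), π ∈ allLists n ↔ π.length ≤ n := by
  intro n
  induction n with
  | zero =>
    intro π
    simp [allLists, List.length_eq_zero_iff]
  | succ n ih =>
    intro π
    cases π with
    | nil => simp [allLists]
    | cons s p =>
      simp [allLists, ih, Nat.succ_le_succ_iff]

@[simp] lemma eLen_nil : eLen [] = 0 := rfl
@[simp] lemma eLen_consN (p : List Step) : eLen (Step.N :: p) = eLen p := by
  simp [eLen, List.count_cons]
@[simp] lemma eLen_consE (p : List Step) : eLen (Step.E :: p) = eLen p + 1 := by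
  simp [eLen, List.count_cons] <;> omega
@[simp] lemma eLen_consD (p : List Step) : eLen (Step.D :: p) = eLen p + 1 := by
  simp [eLen, List.count_cons] <;> omega
@[simp] lemma nLen_nil : nLen [] = 0 := rfl
@[simp] lemma nLen_consN (p : List Step) : nLen (Step.N :: p) = nLen p + 1 := by
  simp [nLen, List.count_cons] <;> omega
@[simp] lemma nLen_consE (p : List Step) : nLen (Step.E :: p) = nLen p := by
  simp [nLen, List.count_cons]
@[simp] lemma nLen_consD (p : List Step) : nLen (Step.D :: p) = nLen p + 1 := by
  simp [nLen, List.count_cons] <;> omega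

lemma length_eq_counts (p : List Step) :
    p.length = p.count Step.N + p.count Step.E + p.count Step.D := by
  induction p with
  | nil => simp
  | cons s q ih => cases s <;> simp [List.count_cons, ih] <;> omega

/-- The sign-reversing involution: toggle the first `D` step or valley `EN`. -/
def toggle : List Step → List Step
  | [] => []
  | Step.D :: q => Step.E :: Step.N :: q
  | Step.N :: q => Step.N :: toggle q
  | [Step.E] => [Step.E]
  | Step.E :: Step.N :: q => Step.D :: q
  | Step.E :: Step.E :: q => Step.E :: toggle (Step.E :: q)
  | Step.E :: Step.D :: q => Step.E :: toggle (Step.D :: q)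

lemma toggle_E_head (q : List Step) :
    (∃ r, toggle (Step.E :: q) = Step.E :: r) ∨
      (∃ r, toggle (Step.E :: q) = Step.D :: r) := by
  match q with
  | [] => exact Or.inl ⟨[], rfl⟩
  | Step.N :: p => exact Or.inr ⟨p, rfl⟩
  | Step.E :: p => exact Or.inl ⟨toggle (Step.E :: p), rfl⟩
  | Step.D :: p => exact Or.inl ⟨toggle (Step.D :: p), rfl⟩

lemma toggle_toggle (π : List Step) : toggle (toggle π) = π := by
  induction π using toggle.induct with
  | case1 => rfl
  | case2 q => rfl
  | case3 q ih => show Step.N :: toggle (toggle q) = _; rw [ih]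
  | case4 => rfl
  | case5 q => rfl
  | case6 q ih =>
    show toggle (Step.E :: toggle (Step.E :: q)) = _
    rcases toggle_E_head q with ⟨r, hr⟩ | ⟨r, hr⟩ <;>
      · rw [hr]
        show Step.E :: toggle _ = _
        rw [← hr, ih]
  | case7 q ih => rfl

lemma toggle_N_cons (q : List Step) : toggle (Step.N :: q) = Step.N :: toggle q := rfl

lemma eLen_toggle (π : List Step) : eLen (toggle π) = eLen π := by
  induction π using toggle.induct with
  | case1 => rfl
  | case2 q => show eLen (Step.E :: Step.N :: q) = _; simp
  | case3 q ih => show eLen (Step.N :: toggle q) = _; simp [ih]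
  | case4 => rfl
  | case5 q => show eLen (Step.D :: q) = _; simp
  | case6 q ih => show eLen (Step.E :: toggle (Step.E :: q)) = _; simp [ih]
  | case7 q ih => show eLen (Step.E :: toggle (Step.D :: q)) = _; simp [ih]

lemma nLen_toggle (π : List Step) : nLen (toggle π) = nLen π := by
  induction π using toggle.induct with
  | case1 => rfl
  | case2 q => show nLen (Step.E :: Step.N :: q) = _; simp
  | case3 q ih => show nLen (Step.N :: toggle q) = _; simp [ih]
  | case4 => rfl
  | case5 q => show nLen (Step.D :: q) = _; simp
  | case6 q ih => show nLen (Step.E :: toggle (Step.E :: q)) = _; simp [ih]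
  | case7 q ih => show nLen (Step.E :: toggle (Step.D :: q)) = _; simp [ih]

lemma countD_toggle (π : List Step) (h : toggle π ≠ π) :
    (toggle π).count Step.D + 1 = π.count Step.D ∨
      (toggle π).count Step.D = π.count Step.D + 1 := by
  induction π using toggle.induct with
  | case1 => exact absurd rfl h
  | case2 q => left; simp [toggle, List.count_cons]
  | case3 q ih =>
    rw [toggle_N_cons] at h ⊢
    have : toggle q ≠ q := by intro hq; exact h (by rw [hq])
    rcases ih this with h' | h' <;> [left; right] <;>
      simp [List.count_cons, h'] <;> omega
  | case4 => exact absurd rfl h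
  | case5 q => right; simp [toggle, List.count_cons]
  | case6 q ih =>
    have he : toggle (Step.E :: Step.E :: q) = Step.E :: toggle (Step.E :: q) := rfl
    rw [he] at h ⊢
    have : toggle (Step.E :: q) ≠ Step.E :: q := by
      intro hq; exact h (by rw [hq])
    rcases ih this with h' | h' <;> [left; right] <;>
      simp only [List.count_cons] at h' ⊢ <;> omega
  | case7 q ih =>
    left
    show (Step.E :: Step.E :: Step.N :: q).count Step.D + 1 = _
    simp [List.count_cons]

lemma colVal_toggle (π : List Step) : ∀ x : ℕ,
    colVal (toggle π) x = colVal π x ∨ colVal (toggle π) x = colVal π x + 1 ∨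
      (colVal (toggle π) x + 1 = colVal π x ∧ Odd (colVal π x)) := by
  induction π using toggle.induct with
  | case1 => intro x; left; rfl
  | case2 q =>
    intro x
    show colVal (Step.E :: Step.N :: q) x = _ ∨ _
    match x with
    | 0 => right; right; exact ⟨rfl, ⟨0, rfl⟩⟩
    | x+1 => left; rfl
  | case3 q ih =>
    intro x
    rw [toggle_N_cons]
    have e1 : colVal (Step.N :: toggle q) x = colVal (toggle q) x + 2 := rfl
    have e2 : colVal (Step.N :: q) x = colVal q x + 2 := rfl
    rw [e1, e2]
    rcases ih x with h | h | ⟨h, k, hk⟩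
    · left; omega
    · right; left; omega
    · exact Or.inr (Or.inr ⟨by omega, k+1, by omega⟩)
  | case4 => intro x; left; rfl
  | case5 q =>
    intro x
    show colVal (Step.D :: q) x = _ ∨ _
    match x with
    | 0 => right; left; rfl
    | x+1 => left; rfl
  | case6 q ih =>
    intro x
    show colVal (Step.E :: toggle (Step.E :: q)) x = _ ∨ _
    match x with
    | 0 => left; rfl
    | x+1 => exact ih x
  | case7 q ih =>
    intro x
    show colVal (Step.E :: toggle (Step.D :: q)) x = _ ∨ _
    match x with
    | 0 => left; rfl
    | x+1 => exact ih x

lemma fixed_eq (π : List Step) (h : toggle π = π) :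
    π = List.replicate (π.count Step.N) Step.N ++ List.replicate (π.count Step.E) Step.E := by
  induction π using toggle.induct with
  | case1 => simp
  | case2 q => simp [toggle] at h
  | case3 q ih =>
    rw [toggle_N_cons] at h
    have hq : toggle q = q := by injection h
    have hN : (Step.N :: q).count Step.N = q.count Step.N + 1 := by simp [List.count_cons]
    have hE : (Step.N :: q).count Step.E = q.count Step.E := by simp [List.count_cons]
    rw [hN, hE, List.replicate_succ, List.cons_append]
    exact congrArg (Step.N :: ·) (ih hq)
  | case4 => rfl
  | case5 q => simp [toggle] at h
  | case6 q ih =>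
    have he : toggle (Step.E :: Step.E :: q) = Step.E :: toggle (Step.E :: q) := rfl
    rw [he] at h
    have hq : toggle (Step.E :: q) = Step.E :: q := by injection h
    have h2 := ih hq
    have hN : (Step.E :: q).count Step.N = 0 := by
      rcases hcase : (Step.E :: q).count Step.N with _ | k
      · rfl
      · rw [hcase, List.replicate_succ] at h2
        exact absurd (congrArg List.head? h2) (by simp)
    rw [hN, List.replicate_zero, List.nil_append] at h2
    have : (Step.E :: Step.E :: q).count Step.N = 0 := by
      simpa [List.count_cons] using hN
    rw [this, List.replicate_zero, List.nil_append]
    have : (Step.E :: Step.E :: q).count Step.E = (Step.E :: q).count Step.E + 1 := by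
      simp [List.count_cons]
    rw [this, List.replicate_succ]
    exact congrArg (Step.E :: ·) h2
  | case7 q ih => simp [toggle] at h

lemma toggle_replE (b : ℕ) : toggle (List.replicate b Step.E) = List.replicate b Step.E := by
  induction b with
  | zero => rfl
  | succ b ih =>
    match b, ih with
    | 0, _ => rfl
    | b+1, ih =>
      show toggle (Step.E :: Step.E :: List.replicate b Step.E) = _
      have : toggle (Step.E :: Step.E :: List.replicate b Step.E)
          = Step.E :: toggle (Step.E :: List.replicate b Step.E) := rfl
      rw [this]
      rw [show (Step.E :: List.replicate b Step.E) = List.replicate (b+1) Step.E from rfl, ih]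
      rfl

lemma toggle_repl (a b : ℕ) :
    toggle (List.replicate a Step.N ++ List.replicate b Step.E)
      = List.replicate a Step.N ++ List.replicate b Step.E := by
  induction a with
  | zero => simpa using toggle_replE b
  | succ a ih =>
    rw [List.replicate_succ, List.cons_append, toggle_N_cons, ih]

lemma colVal_replN_append (a : ℕ) (l : List Step) (x : ℕ) :
    colVal (List.replicate a Step.N ++ l) x = 2*a + colVal l x := by
  induction a with
  | zero => simp
  | succ a ih =>
    rw [List.replicate_succ, List.cons_append]
    show colVal (List.replicate a Step.N ++ l) x + 2 = _
    omega

lemma colVal_replE (b : ℕ) : ∀ x, colVal (List.replicate b Step.E) x = 0 := by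
  induction b with
  | zero => intro x; rfl
  | succ b ih =>
    intro x
    rw [List.replicate_succ]
    match x with
    | 0 => rfl
    | x+1 => exact ih x

lemma colVal_le (p : List Step) : ∀ x, colVal p x ≤ 2 * nLen p := by
  induction p with
  | nil => intro x; simp [colVal]
  | cons s q ih =>
    intro x
    cases s
    · have e : colVal (Step.N :: q) x = colVal q x + 2 := rfl
      rw [e, nLen_consN]; have := ih x; omega
    · match x with
      | 0 =>
        have e : colVal (Step.E :: q) 0 = 0 := rfl
        rw [e]; omega
      | x+1 =>
        have e : colVal (Step.E :: q) (x+1) = colVal q x := rfl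
        rw [e, nLen_consE]; exact ih x
    · match x with
      | 0 =>
        have e : colVal (Step.D :: q) 0 = 1 := rfl
        rw [e, nLen_consD]; omega
      | x+1 =>
        have e : colVal (Step.D :: q) (x+1) = colVal q x + 2 := rfl
        rw [e, nLen_consD]; have := ih x; omega

lemma even_colVal (ν : List Step) (hν : Step.D ∉ ν) : ∀ x, Even (colVal ν x) := by
  induction ν with
  | nil => intro x; exact ⟨0, rfl⟩
  | cons s q ih =>
    have hq : Step.D ∉ q := fun h => hν (List.mem_cons_of_mem _ h)
    intro x
    cases s
    · have := ih hq x
      show Even (colVal q x + 2)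
      rcases this with ⟨k, hk⟩; exact ⟨k+1, by omega⟩
    · match x with
      | 0 => exact ⟨0, rfl⟩
      | x+1 => exact ih hq x
    · exact absurd List.mem_cons_self hν

lemma weaklyAbove_toggle (ν π : List Step) (hν : Step.D ∉ ν)
    (h : WeaklyAbove π ν) : WeaklyAbove (toggle π) ν := by
  intro x
  have hx := h x
  rcases colVal_toggle π x with h' | h' | ⟨h', hodd⟩
  · omega
  · omega
  · have heven := even_colVal ν hν x
    rcases heven with ⟨k, hk⟩
    rcases hodd with ⟨m, hm⟩
    omega

lemma isSmallSchroder_toggle (ν π : List Step) (hν : Step.D ∉ ν)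
    (h : IsSmallSchroder ν π) : IsSmallSchroder ν (toggle π) :=
  ⟨by rw [eLen_toggle]; exact h.1, by rw [nLen_toggle]; exact h.2.1,
    weaklyAbove_toggle ν π hν h.2.2⟩

/-- The alternating sum `Σ_i (−1)ⁱ sch_ν(i)` equals `1`. -/
theorem alternating_sum_schroder (ν : List Step) (hν : IsLatticePath ν) :
    ∑ i ∈ Finset.range (eLen ν + 1), (-1 : ℤ)^i * schNum ν i = 1 := by
  classical
  have hD : Step.D ∉ ν := hν
  set S : Finset (List Step) :=
    (allLists (nLen ν + eLen ν)).filter (fun π => IsSmallSchroder ν π) with hS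
  have hmemS : ∀ π : List Step, π ∈ S ↔ IsSmallSchroder ν π := by
    intro π
    simp only [hS, Finset.mem_filter, mem_allLists]
    constructor
    · exact fun h => h.2
    · intro h
      refine ⟨?_, h⟩
      have h1 : π.count Step.E + π.count Step.D = eLen ν := h.1
      have h2 : π.count Step.N + π.count Step.D = nLen ν := h.2.1
      have h3 := length_eq_counts π
      omega
  have hcard : ∀ i, (schNum ν i : ℤ)
      = ((S.filter (fun π => π.count Step.D = i)).card : ℤ) := by
    intro i
    congr 1
    have e1 : schNum ν i
        = Set.ncard {π : List Step | IsSmallSchroder ν π ∧ π.count Step.D = i} := by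
      rw [← Nat.card_coe_set_eq]; rfl
    have hset : {π : List Step | IsSmallSchroder ν π ∧ π.count Step.D = i}
        = ↑(S.filter (fun π => π.count Step.D = i)) := by
      ext π
      simp only [Set.mem_setOf_eq, Finset.coe_filter, Finset.mem_coe, hmemS]
    rw [e1, hset, Set.ncard_coe_finset]
  have key : ∑ i ∈ Finset.range (eLen ν + 1), (-1:ℤ)^i * schNum ν i
      = ∑ π ∈ S, (-1:ℤ)^(π.count Step.D) := by
    have hmaps : ∀ π ∈ S, π.count Step.D ∈ Finset.range (eLen ν + 1) := by
      intro π hπ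
      rw [hmemS] at hπ
      have h1 : π.count Step.E + π.count Step.D = eLen ν := hπ.1
      rw [Finset.mem_range]
      omega
    rw [← Finset.sum_fiberwise_of_maps_to hmaps (fun π => (-1:ℤ)^(π.count Step.D))]
    refine Finset.sum_congr rfl (fun i _ => ?_)
    rw [hcard i]
    have : ∑ π ∈ S.filter (fun π => π.count Step.D = i), (-1:ℤ)^(π.count Step.D)
        = ∑ π ∈ S.filter (fun π => π.count Step.D = i), (-1:ℤ)^i :=
      Finset.sum_congr rfl fun π hπ => by rw [(Finset.mem_filter.1 hπ).2]
    rw [this, Finset.sum_const, nsmul_eq_mul, mul_comm]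
  set ν₀ : List Step := List.replicate (nLen ν) Step.N ++ List.replicate (eLen ν) Step.E
    with hν₀
  have hcDν₀ : ν₀.count Step.D = 0 := by
    simp [hν₀, List.count_append, List.count_replicate]
  have hν₀S : ν₀ ∈ S := by
    rw [hmemS]
    refine ⟨?_, ?_, ?_⟩
    · show ν₀.count Step.E + ν₀.count Step.D = eLen ν
      simp [hν₀, List.count_append, List.count_replicate]
    · show ν₀.count Step.N + ν₀.count Step.D = nLen ν
      simp [hν₀, List.count_append, List.count_replicate]
    · intro x
      rw [hν₀, colVal_replN_append, colVal_replE]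
      have := colVal_le ν x
      omega
  have hne : ∀ π ∈ S.erase ν₀, toggle π ≠ π := by
    intro π hπ heq
    have hπS := (hmemS π).1 (Finset.mem_of_mem_erase hπ)
    have hπν₀ := Finset.ne_of_mem_erase hπ
    have hfix := fixed_eq π heq
    have hcD : π.count Step.D = 0 := by
      have : π.count Step.D
          = (List.replicate (π.count Step.N) Step.N
              ++ List.replicate (π.count Step.E) Step.E).count Step.D := by
        rw [← hfix]
      rw [this]
      simp [List.count_append, List.count_replicate]
    have h1 : π.count Step.E + π.count Step.D = eLen ν := hπS.1
    have h2 : π.count Step.N + π.count Step.D = nLen ν := hπS.2.1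
    exact hπν₀ (by rw [hfix, hν₀]; rw [show π.count Step.N = nLen ν by omega,
      show π.count Step.E = eLen ν by omega])
  have h0 : ∑ π ∈ S.erase ν₀, (-1:ℤ)^(π.count Step.D) = 0 := by
    have g_mem : ∀ π ∈ S.erase ν₀, toggle π ∈ S.erase ν₀ := by
      intro π hπ
      refine Finset.mem_erase.2 ⟨?_, ?_⟩
      · intro heq
        have hfix : π = ν₀ := by
          rw [← toggle_toggle π, heq, hν₀, toggle_repl]
        exact Finset.ne_of_mem_erase hπ hfix
      · rw [hmemS]
        exact isSmallSchroder_toggle ν π hD ((hmemS π).1 (Finset.mem_of_mem_erase hπ))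
    refine Finset.sum_involution (fun π _ => toggle π) ?_ ?_ g_mem ?_
    · intro π hπ
      rcases countD_toggle π (hne π hπ) with h' | h'
      · rw [← h', pow_succ]; ring
      · rw [h', pow_succ]; ring
    · intro π hπ _
      exact hne π hπ
    · intro π hπ
      exact toggle_toggle π
  rw [key, ← Finset.add_sum_erase S _ hν₀S, h0, hcDν₀]
  norm_num
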